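/- For d×d max-plus matrices M and H and all k ≥ 2, the first component of the k-th semidirect power equals (M ⊗ (I ⊕ H) ⊕ H) ⊗ (I ⊕ H)^{⊗(k-2)}. -/

import Mathlib

open Finset

abbrev Rmax : Type := WithBot ℝ

/-- Tropical (max-plus) matrix product. -/
noncomputable def trMul {l m n : ℕ} (A : Matrix (Fin l) (Fin m) Rmax) (B : Matrix (Fin m) (Fin n) Rmax) :
    Matrix (Fin l) (Fin n) Rmax :=
  fun i j => univ.sup fun k => A i k + B k j

/-- Entrywise tropical sum (max) of matrices. -/
noncomputable def trSup {m n : ℕ} (A B : Matrix (Fin m) (Fin n) Rmax) : Matrix (Fin m) (Fin n) Rmax :=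
  fun i j => A i j ⊔ B i j

/-- Tropical identity matrix. -/
noncomputable def trId (d : ℕ) : Matrix (Fin d) (Fin d) Rmax := fun i j => if i = j then 0 else ⊥

/-- Tropical matrix powers, `trPow A 0 = I`. -/
noncomputable def trPow {d : ℕ} (A : Matrix (Fin d) (Fin d) Rmax) : ℕ → Matrix (Fin d) (Fin d) Rmax
  | 0 => trId d
  | n + 1 => trMul (trPow A n) A

/-- Adjoint product `A ∘ B = A ⊕ B ⊕ (A ⊗ B)`. -/
noncomputable def adj {d : ℕ} (A B : Matrix (Fin d) (Fin d) Rmax) : Matrix (Fin d) (Fin d) Rmax :=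
  trSup (trSup A B) (trMul A B)

/-- Adjoint powers: `adjPow A n = A^{∘n}` for `n ≥ 1` (value at 0 is junk `A`). -/
noncomputable def adjPow {d : ℕ} (A : Matrix (Fin d) (Fin d) Rmax) : ℕ → Matrix (Fin d) (Fin d) Rmax
  | 0 => A
  | 1 => A
  | n + 2 => adj (adjPow A (n + 1)) A

/-- Semidirect product of pairs:
`(M,G)·(A,H) = (M ⊕ A ⊕ H ⊕ (M ⊗ H), G ∘ H)`. -/
noncomputable def sd {d : ℕ} (p q : Matrix (Fin d) (Fin d) Rmax × Matrix (Fin d) (Fin d) Rmax) :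
    Matrix (Fin d) (Fin d) Rmax × Matrix (Fin d) (Fin d) Rmax :=
  (trSup (trSup (trSup p.1 q.1) q.2) (trMul p.1 q.2), adj p.2 q.2)

/-- Semidirect powers: `sdPow p n = p^n` for `n ≥ 1` (value at 0 is junk `p`). -/
noncomputable def sdPow {d : ℕ} (p : Matrix (Fin d) (Fin d) Rmax × Matrix (Fin d) (Fin d) Rmax) :
    ℕ → Matrix (Fin d) (Fin d) Rmax × Matrix (Fin d) (Fin d) Rmax
  | 0 => p
  | 1 => p
  | n + 2 => sd (sdPow p (n + 1)) p

/-- Maximum cycle mean `λ(F)`: maximum over cycles `(c 0, c 1, …, c k, c 0)` of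
the average arc weight. -/
noncomputable def mcm {d : ℕ} (F : Matrix (Fin d) (Fin d) Rmax) : Rmax :=
  univ.sup fun kc : Σ k : Fin d, Fin (k.1 + 1) → Fin d =>
    (∑ i, F (kc.2 i) (kc.2 (i + 1))).map fun w => w / ((kc.1 : ℕ) + 1)

/-- Metric matrix `A⁺ = A ⊕ A^{⊗2} ⊕ ⋯ ⊕ A^{⊗d}`. -/
noncomputable def metric {d : ℕ} (A : Matrix (Fin d) (Fin d) Rmax) : Matrix (Fin d) (Fin d) Rmax :=
  fun i j => (Finset.Icc 1 d).sup fun k => trPow A k i j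

/-- Kleene star `A* = I ⊕ A ⊕ ⋯ ⊕ A^{⊗(d-1)}`. -/
noncomputable def kstar {d : ℕ} (A : Matrix (Fin d) (Fin d) Rmax) : Matrix (Fin d) (Fin d) Rmax :=
  fun i j => (Finset.range d).sup fun k => trPow A k i j

/-- `F` is irreducible: its weighted digraph is strongly connected. -/
def TrIrreducible {d : ℕ} (F : Matrix (Fin d) (Fin d) Rmax) : Prop :=
  ∀ i j : Fin d, Relation.ReflTransGen (fun a b => F a b ≠ ⊥) i j

section Aux
variable {d : ℕ}

lemma tr_sup_add {ι : Type*} (s : Finset ι) (f : ι → Rmax) (c : Rmax) :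
    s.sup f + c = s.sup (fun k => f k + c) :=
  Finset.comp_sup_eq_sup_comp (· + c) (fun x y => (max_add_add_right x y c).symm) (by simp)

lemma tr_add_sup {ι : Type*} (s : Finset ι) (f : ι → Rmax) (c : Rmax) :
    c + s.sup f = s.sup (fun k => c + f k) :=
  Finset.comp_sup_eq_sup_comp (c + ·) (fun x y => (max_add_add_left c x y).symm) (by simp)

lemma trMul_id_right (A : Matrix (Fin d) (Fin d) Rmax) : trMul A (trId d) = A := by
  funext i j
  simp only [trMul, trId]
  apply le_antisymm
  · apply Finset.sup_le
    intro k _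
    by_cases h : k = j <;> simp [h]
  · have := Finset.le_sup (f := fun k => A i k + if k = j then (0:Rmax) else ⊥)
      (Finset.mem_univ j)
    simpa using this

lemma trMul_sup_right (A B C : Matrix (Fin d) (Fin d) Rmax) :
    trMul A (trSup B C) = trSup (trMul A B) (trMul A C) := by
  funext i j
  simp only [trMul, trSup]
  rw [← Finset.sup_sup]
  congr 1
  funext k
  exact (max_add_add_left (A i k) (B k j) (C k j)).symm

lemma trMul_assoc (A B C : Matrix (Fin d) (Fin d) Rmax) :
    trMul (trMul A B) C = trMul A (trMul B C) := by
  funext i j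
  simp only [trMul]
  calc (univ.sup fun k => (univ.sup fun l => A i l + B l k) + C k j)
      = univ.sup fun k => univ.sup fun l => A i l + B l k + C k j := by
        congr 1; funext k; rw [tr_sup_add]
    _ = univ.sup fun l => univ.sup fun k => A i l + B l k + C k j := Finset.sup_comm _ _ _
    _ = univ.sup fun l => A i l + univ.sup fun k => B l k + C k j := by
        congr 1; funext l; rw [tr_add_sup]; simp only [add_assoc]

lemma le_trMul_self (A P : Matrix (Fin d) (Fin d) Rmax) (hP : ∀ j, (0:Rmax) ≤ P j j)
    (i j : Fin d) : A i j ≤ trMul A P i j := by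
  have h1 : A i j + P j j ≤ trMul A P i j :=
    Finset.le_sup (f := fun k => A i k + P k j) (Finset.mem_univ j)
  calc A i j = A i j + 0 := (add_zero _).symm
    _ ≤ A i j + P j j := add_le_add le_rfl (hP j)
    _ ≤ _ := h1

lemma trPow_diag_nonneg (P : Matrix (Fin d) (Fin d) Rmax) (hP : ∀ j, (0:Rmax) ≤ P j j) :
    ∀ n j, (0:Rmax) ≤ trPow P n j j := by
  intro n
  induction n with
  | zero => intro j; simp [trPow, trId]
  | succ n ih =>
    intro j
    exact le_trans (ih j) (le_trMul_self _ P hP j j)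

lemma sdPow_fst_aux (M H : Matrix (Fin d) (Fin d) Rmax) (n : ℕ) :
    (sdPow (M, H) (n + 2)).1 =
      trMul (trSup (trMul M (trSup (trId d) H)) H) (trPow (trSup (trId d) H) n) := by
  set N := trSup (trId d) H with hN
  set Q := trSup (trMul M N) H with hQ
  have hNdiag : ∀ j, (0:Rmax) ≤ N j j := by
    intro j; rw [hN]; simp only [trSup, trId, if_pos rfl]; exact le_sup_left
  induction n with
  | zero =>
    show (sd (sdPow (M, H) 1) (M, H)).1 = trMul Q (trPow N 0)
    show (sd (M, H) (M, H)).1 = trMul Q (trId d)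
    rw [trMul_id_right, hQ, hN, trMul_sup_right, trMul_id_right]
    funext i j
    simp only [sd, trSup]
    rw [sup_idem, sup_right_comm]
  | succ n ih =>
    show (sd (sdPow (M, H) (n + 2)) (M, H)).1 = trMul Q (trPow N (n + 1))
    have hF := ih
    set F := (sdPow (M, H) (n + 2)).1 with hFdef
    have hrhs : trMul Q (trPow N (n + 1)) = trSup F (trMul F H) := by
      show trMul Q (trMul (trPow N n) N) = _
      rw [← trMul_assoc, ← hF, hN, trMul_sup_right, trMul_id_right]
    rw [hrhs]
    funext i j
    simp only [sd, trSup]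
    have hQF : ∀ a b, Q a b ≤ F a b := by
      intro a b
      rw [hF]
      exact le_trMul_self Q _ (trPow_diag_nonneg N hNdiag n) a b
    have hM : M i j ≤ F i j := by
      refine le_trans ?_ (hQF i j)
      rw [hQ]
      exact le_trans (le_trMul_self M N hNdiag i j) le_sup_left
    have hH : H i j ≤ F i j := le_trans (le_sup_right (a := trMul M N i j)) (hQF i j)
    rw [sup_eq_left.mpr hM, sup_eq_left.mpr hH]

end Aux

theorem sdPow_fst_eq {d : ℕ} (M H : Matrix (Fin d) (Fin d) Rmax) (k : ℕ) (hk : 2 ≤ k) :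
    (sdPow (M, H) k).1 =
      trMul (trSup (trMul M (trSup (trId d) H)) H) (trPow (trSup (trId d) H) (k - 2)) := by
  obtain ⟨n, rfl⟩ : ∃ n, k = n + 2 := ⟨k - 2, by omega⟩
  simpa using sdPow_fst_aux M H n
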